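/- Let m ≥ 2 and let u_{-1} = 0 and u_{i-1} ≤ u_i + ((m-Δ-2+γ)/m)·C(m,i) - γ·C(m-1,i) for i = 0,...,m-2, with u_{m-2} = m-1. Then γ ≤ (2^m - 1 - m)/((m-2)·2^{m-1} + 1) · (m - Δ - 2 + m(m-1)/(2^m - 1 - m)) when m ≥ 3. -/

import Mathlib

/-- If `u_{-1} = 0`, `u_{m-2} = m-1` and
`u_{i-1} ≤ u_i + ((m-Δ-2+γ)/m)·C(m,i) - γ·C(m-1,i)` for `0 ≤ i ≤ m-2`, then for `m ≥ 3`
`γ ≤ (2^m-1-m)/((m-2)·2^{m-1}+1) · (m-Δ-2 + m(m-1)/(2^m-1-m))`. -/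
theorem stmt6 (m : ℕ) (hm : 3 ≤ m) (Δ γ : ℝ) (u : ℤ → ℝ)
    (h0 : u (-1) = 0) (hend : u ((m : ℤ) - 2) = (m : ℝ) - 1)
    (hrec : ∀ i : ℤ, 0 ≤ i → i ≤ (m : ℤ) - 2 →
      u (i - 1) ≤ u i + (((m : ℝ) - Δ - 2 + γ) / m) * (m.choose i.toNat : ℝ)
                  - γ * ((m - 1).choose i.toNat : ℝ)) :
    γ ≤ ((2 : ℝ) ^ m - 1 - m) / (((m : ℝ) - 2) * 2 ^ (m - 1) + 1)
        * ((m : ℝ) - Δ - 2 + m * ((m : ℝ) - 1) / (2 ^ m - 1 - m)) := by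
  obtain ⟨k, rfl⟩ : ∃ k, m = k + 3 := ⟨m - 3, by omega⟩
  -- telescoping
  have key : ∀ n : ℕ, (n : ℤ) ≤ (k : ℤ) + 2 →
      u (-1) ≤ u ((n : ℤ) - 1)
        + (((k : ℝ) + 3 - Δ - 2 + γ) / (k + 3)) * (∑ i ∈ Finset.range n, ((k + 3).choose i : ℝ))
        - γ * (∑ i ∈ Finset.range n, ((k + 2).choose i : ℝ)) := by
    intro n
    induction n with
    | zero => intro _; simp
    | succ n ih =>
      intro hn
      have h1 := ih (by omega)
      have h2 := hrec n (by positivity) (by push_cast; omega)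
      rw [Int.toNat_natCast] at h2
      have e1 : ((n + 1 : ℕ) : ℤ) - 1 = (n : ℤ) := by push_cast; ring
      rw [e1, Finset.sum_range_succ, Finset.sum_range_succ]
      push_cast at h2 ⊢
      linarith
  -- evaluate the sums
  have s1n : (∑ i ∈ Finset.range (k + 2), (k + 3).choose i) + (k + 4) = 2 ^ (k + 3) := by
    have h := Nat.sum_range_choose (k + 3)
    rw [show k + 3 + 1 = (k + 2) + 1 + 1 from rfl, Finset.sum_range_succ,
      Finset.sum_range_succ] at h
    rw [Nat.choose_self] at h
    have : (k + 3).choose (k + 2) = k + 3 := by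
      rw [show k + 3 = (k + 2) + 1 from rfl, Nat.choose_succ_self_right]
    omega
  have s2n : (∑ i ∈ Finset.range (k + 2), (k + 2).choose i) + 1 = 2 ^ (k + 2) := by
    have h := Nat.sum_range_choose (k + 2)
    rw [Finset.sum_range_succ, Nat.choose_self] at h
    omega
  have s1 : (∑ i ∈ Finset.range (k + 2), ((k + 3).choose i : ℝ)) = 2 ^ (k + 3) - (k + 4) := by
    have := congrArg (Nat.cast : ℕ → ℝ) s1n
    push_cast at this
    linarith
  have s2 : (∑ i ∈ Finset.range (k + 2), ((k + 2).choose i : ℝ)) = 2 ^ (k + 2) - 1 := by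
    have := congrArg (Nat.cast : ℕ → ℝ) s2n
    push_cast at this
    linarith
  have F := key (k + 2) (by push_cast; omega)
  rw [s1, s2] at F
  have e3 : ((k + 2 : ℕ) : ℤ) - 1 = ((k + 3 : ℕ) : ℤ) - 2 := by push_cast; ring
  rw [e3, hend, h0] at F
  push_cast at F
  -- now the algebra
  have hP : (k : ℝ) + 1 ≤ 2 ^ k := by
    have : k < 2 ^ k := Nat.lt_two_pow_self
    exact_mod_cast this
  have hP0 : (0 : ℝ) < 2 ^ k := by positivity
  have e8 : (2 : ℝ) ^ (k + 3) = 8 * 2 ^ k := by ring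
  have e4 : (2 : ℝ) ^ (k + 2) = 4 * 2 ^ k := by ring
  have hA : (0 : ℝ) < 2 ^ (k + 3) - 1 - (k + 3 : ℕ) := by
    rw [e8]; push_cast; nlinarith
  have hB : (0 : ℝ) < (((k + 3 : ℕ) : ℝ) - 2) * 2 ^ (k + 3 - 1) + 1 := by
    have h1 : (0:ℝ) ≤ ((k:ℝ) + 1) * 2 ^ (k + 2) := by positivity
    push_cast
    norm_num
    nlinarith [h1]
  rw [div_mul_eq_mul_div, le_div_iff₀ hB]
  push_cast at hB ⊢
  norm_num at hB ⊢
  rw [e8] at F hA ⊢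
  rw [e4] at F ⊢
  have hk3 : (0:ℝ) < (k:ℝ) + 3 := by positivity
  have F2 : 0 ≤ ((k:ℝ) + 3) * ((k:ℝ) + 3 - 1) + ((k:ℝ) + 3 - Δ - 2 + γ) * (8 * 2 ^ k - ((k:ℝ) + 4)) - γ * (4 * 2 ^ k - 1) * ((k:ℝ) + 3) := by
    have := mul_le_mul_of_nonneg_left F (le_of_lt hk3)
    field_simp at this
    nlinarith [this]
  have hAcast : (0:ℝ) < 8 * 2 ^ k - 1 - ((k:ℝ) + 3) := by push_cast at hA; linarith
  have erhs : (8 * 2 ^ k - 1 - ((k:ℝ) + 3)) *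
      ((k:ℝ) + 3 - Δ - 2 + ((k:ℝ) + 3) * ((k:ℝ) + 3 - 1) / (8 * 2 ^ k - 1 - ((k:ℝ) + 3)))
      = (8 * 2 ^ k - 1 - ((k:ℝ) + 3)) * ((k:ℝ) + 3 - Δ - 2) + ((k:ℝ) + 3) * ((k:ℝ) + 3 - 1) := by
    field_simp
  rw [erhs]
  nlinarith [F2]
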